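/- Let f be an E-polynomial and D = min{i : pder^{(i+1)}(f) = 0}. Then distinct real zeros of f have distinct sign vectors (sign(pder^{(1)}(f)(ξ)), …, sign(pder^{(D)}(f)(ξ))); that is, the zeros of f are uniquely determined by the signs of the iterated pseudo-derivatives of f at them. -/

import Mathlib

noncomputable section

/-- Evaluation of a bivariate integer polynomial (a polynomial in `Y` with coefficients
in `ℤ[X]`) at `(x, y) ∈ ℝ²`. -/
def ev (P : Polynomial (Polynomial ℤ)) (x y : ℝ) : ℝ :=
  Polynomial.eval₂ (Polynomial.eval₂RingHom (Int.castRingHom ℝ) x) y P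

/-- The E-polynomial `x ↦ F(x, e^{h(x)})`. -/
def epoly (h : Polynomial ℤ) (F : Polynomial (Polynomial ℤ)) (x : ℝ) : ℝ :=
  ev F x (Real.exp (Polynomial.eval₂ (Int.castRingHom ℝ) x h))

/-- Partial derivative with respect to `X` (the inner variable). -/
def dX (P : Polynomial (Polynomial ℤ)) : Polynomial (Polynomial ℤ) :=
  P.sum fun n c => Polynomial.C (Polynomial.derivative c) * Polynomial.X ^ n

/-- The polynomial `F̃ = ∂F/∂X + (∂F/∂Y)·h'(X)·Y` defining the derivative of the
E-polynomial `x ↦ F(x, e^{h(x)})`. -/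
def FtildeE (h : Polynomial ℤ) (F : Polynomial (Polynomial ℤ)) : Polynomial (Polynomial ℤ) :=
  dX F + Polynomial.derivative F * (Polynomial.C (Polynomial.derivative h) * Polynomial.X)

/-- The pseudo-derivative at the level of defining polynomials: it is `F̃` when
`deg_X F(X,0) > 0`; when `F(X,0)` is constant and `F̃ ≠ 0` it is `F̃` divided by the
largest power `Y^k` dividing it; and it is `0` when `F̃ = 0`. -/
def pderPoly (h : Polynomial ℤ) (F : Polynomial (Polynomial ℤ)) : Polynomial (Polynomial ℤ) :=
  let Ft := FtildeE h F
  if Ft = 0 then 0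
  else if 0 < (F.coeff 0).natDegree then Ft
  else Polynomial.divX^[Ft.natTrailingDegree] Ft

namespace ThomAux

open Polynomial Real Filter Set

/-- the real function given by `h`. -/
def Hc (h : Polynomial ℤ) (x : ℝ) : ℝ := (h.map (Int.castRingHom ℝ)).eval x

/-- the `i`-th coefficient of `F` as a real polynomial. -/
def cf (F : Polynomial (Polynomial ℤ)) (i : ℕ) : Polynomial ℝ :=
  (F.coeff i).map (Int.castRingHom ℝ)

lemma epoly_eq (h : Polynomial ℤ) (F : Polynomial (Polynomial ℤ)) (x : ℝ) :
    epoly h F x = (F.map (Polynomial.eval₂RingHom (Int.castRingHom ℝ) x)).eval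
      (Real.exp (Hc h x)) := by
  rw [epoly, ev, Polynomial.eval₂_eq_eval_map, Hc, Polynomial.eval₂_eq_eval_map]

@[simp] lemma epoly_zero (h : Polynomial ℤ) (x : ℝ) : epoly h 0 x = 0 := by
  simp [epoly, ev]

lemma epoly_eq_sum (h : Polynomial ℤ) (F : Polynomial (Polynomial ℤ)) {N : ℕ}
    (hN : F.natDegree < N) (x : ℝ) :
    epoly h F x = ∑ i ∈ Finset.range N, (cf F i).eval x * Real.exp (Hc h x) ^ i := by
  rw [epoly_eq, Polynomial.eval_eq_sum_range' (lt_of_le_of_lt (Polynomial.natDegree_map_le) hN)]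
  refine Finset.sum_congr rfl fun i _ => ?_
  rw [Polynomial.coeff_map, Polynomial.coe_eval₂RingHom, Polynomial.eval₂_eq_eval_map, cf]

lemma coeff_dX (F : Polynomial (Polynomial ℤ)) (i : ℕ) :
    (dX F).coeff i = Polynomial.derivative (F.coeff i) := by
  rw [dX, Polynomial.sum, Polynomial.finset_sum_coeff]
  simp_rw [Polynomial.C_mul_X_pow_eq_monomial, Polynomial.coeff_monomial]
  rw [Finset.sum_ite_eq' F.support]
  by_cases hi : i ∈ F.support
  · simp [hi]
  · simp only [hi, if_false]
    rw [Polynomial.notMem_support_iff.mp hi, map_zero]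

lemma coeff_FtildeE (h : Polynomial ℤ) (F : Polynomial (Polynomial ℤ)) (i : ℕ) :
    (FtildeE h F).coeff i = Polynomial.derivative (F.coeff i)
      + F.coeff i * Polynomial.derivative h * (i : Polynomial ℤ) := by
  rw [FtildeE, Polynomial.coeff_add, coeff_dX]
  congr 1
  have : Polynomial.derivative F * (Polynomial.C (Polynomial.derivative h) * Polynomial.X)
      = (Polynomial.derivative F * Polynomial.C (Polynomial.derivative h)) * Polynomial.X := by
    ring
  rw [this]
  cases i with
  | zero => simp
  | succ k =>
      rw [Polynomial.coeff_mul_X, Polynomial.coeff_mul_C, Polynomial.coeff_derivative]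
      push_cast
      ring

lemma natDegree_FtildeE_le (h : Polynomial ℤ) (F : Polynomial (Polynomial ℤ)) :
    (FtildeE h F).natDegree ≤ F.natDegree := by
  rw [Polynomial.natDegree_le_iff_coeff_eq_zero]
  intro m hm
  rw [coeff_FtildeE, Polynomial.coeff_eq_zero_of_natDegree_lt hm]
  simp

lemma hasDerivAt_Hc (h : Polynomial ℤ) (x : ℝ) :
    HasDerivAt (Hc h) (Hc (Polynomial.derivative h) x) x := by
  have := (h.map (Int.castRingHom ℝ)).hasDerivAt x
  rw [Polynomial.derivative_map] at this
  exact this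

lemma hasDerivAt_cf (F : Polynomial (Polynomial ℤ)) (i : ℕ) (x : ℝ) :
    HasDerivAt (fun x => (cf F i).eval x)
      (((Polynomial.derivative (F.coeff i)).map (Int.castRingHom ℝ)).eval x) x := by
  have := (cf F i).hasDerivAt x
  simpa [cf, Polynomial.derivative_map] using this

lemma hasDerivAt_epoly (h : Polynomial ℤ) (F : Polynomial (Polynomial ℤ)) (x : ℝ) :
    HasDerivAt (epoly h F) (epoly h (FtildeE h F) x) x := by
  set M := F.natDegree + 1 with hM
  have hrep : epoly h F = fun x =>
      ∑ i ∈ Finset.range M, (cf F i).eval x * Real.exp (Hc h x) ^ i := by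
    funext y; exact epoly_eq_sum h F (Nat.lt_succ_self _) y
  rw [hrep]
  have hder : HasDerivAt
      (fun x => ∑ i ∈ Finset.range M, (cf F i).eval x * Real.exp (Hc h x) ^ i)
      (∑ i ∈ Finset.range M,
        ((((Polynomial.derivative (F.coeff i)).map (Int.castRingHom ℝ)).eval x
          + (cf F i).eval x * ((Hc (Polynomial.derivative h) x) * (i : ℝ)))
          * Real.exp (Hc h x) ^ i)) x := by
    refine HasDerivAt.fun_sum fun i _ => ?_
    have h1 := hasDerivAt_cf F i x
    have h2 : HasDerivAt (fun x => Real.exp (Hc h x) ^ i)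
        ((i : ℝ) * Real.exp (Hc h x) ^ (i - 1)
          * (Real.exp (Hc h x) * Hc (Polynomial.derivative h) x)) x :=
      ((hasDerivAt_Hc h x).exp).pow i
    have := h1.fun_mul h2
    convert this using 1
    · rfl
    have hpow : (i : ℝ) * Real.exp (Hc h x) ^ (i - 1) * Real.exp (Hc h x)
        = (i : ℝ) * Real.exp (Hc h x) ^ i := by
      cases i with
      | zero => simp
      | succ k => rw [Nat.add_sub_cancel, pow_succ]; ring
    calc (((Polynomial.derivative (F.coeff i)).map (Int.castRingHom ℝ)).eval x
          + (cf F i).eval x * ((Hc (Polynomial.derivative h) x) * (i : ℝ)))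
          * Real.exp (Hc h x) ^ i
        = ((Polynomial.derivative (F.coeff i)).map (Int.castRingHom ℝ)).eval x
            * Real.exp (Hc h x) ^ i
          + (cf F i).eval x * (((i:ℝ) * Real.exp (Hc h x) ^ (i-1) * Real.exp (Hc h x))
              * (Hc (Polynomial.derivative h) x)) := by rw [hpow]; ring
      _ = _ := by ring
  convert hder using 1
  rw [epoly_eq_sum h (FtildeE h F) (Nat.lt_succ_of_le (natDegree_FtildeE_le h F)) x]
  refine Finset.sum_congr rfl fun i _ => ?_
  congr 1
  rw [cf, coeff_FtildeE]
  push_cast [Polynomial.map_add, Polynomial.map_mul, Polynomial.map_natCast,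
    Polynomial.eval_add, Polynomial.eval_mul, Polynomial.eval_natCast]
  simp only [cf, Hc]
  ring


lemma X_pow_mul_divX_iter {R : Type*} [CommRing R] :
    ∀ (k : ℕ) (P : Polynomial R), k ≤ P.natTrailingDegree →
      Polynomial.X ^ k * (Polynomial.divX)^[k] P = P := by
  intro k
  induction k with
  | zero => intro P _; simp
  | succ k ih =>
      intro P hk
      have hP0 : P ≠ 0 := by
        rintro rfl
        simp at hk
      have hc0 : P.coeff 0 = 0 :=
        Polynomial.coeff_eq_zero_of_lt_natTrailingDegree (lt_of_lt_of_le (Nat.succ_pos k) hk)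
      have hdx : P.divX ≠ 0 := by
        intro hd
        apply hP0
        have := P.divX_mul_X_add
        rw [hd, hc0] at this
        simpa using this.symm
      have htd : k ≤ P.divX.natTrailingDegree := by
        refine Polynomial.le_natTrailingDegree hdx fun m hm => ?_
        rw [Polynomial.coeff_divX]
        exact Polynomial.coeff_eq_zero_of_lt_natTrailingDegree
          (lt_of_lt_of_le (Nat.succ_lt_succ hm) hk)
      have := ih P.divX htd
      calc Polynomial.X ^ (k + 1) * (Polynomial.divX)^[k + 1] P
          = Polynomial.X * (Polynomial.X ^ k * (Polynomial.divX)^[k] P.divX) := by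
            rw [Function.iterate_succ_apply]; ring
        _ = Polynomial.X * P.divX := by rw [this]
        _ = P := by
            have := P.divX_mul_X_add
            rw [hc0] at this
            simpa [mul_comm] using this

lemma epoly_X_pow_mul (h : Polynomial ℤ) (G : Polynomial (Polynomial ℤ)) (k : ℕ) (x : ℝ) :
    epoly h (Polynomial.X ^ k * G) x = Real.exp (Hc h x) ^ k * epoly h G x := by
  simp [epoly_eq, Polynomial.map_mul, Polynomial.map_pow]

lemma epoly_FtildeE (h : Polynomial ℤ) (G : Polynomial (Polynomial ℤ)) (x : ℝ) :
    epoly h (FtildeE h G) x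
      = Real.exp (Hc h x) ^ (FtildeE h G).natTrailingDegree * epoly h (pderPoly h G) x := by
  rw [pderPoly]
  by_cases h0 : FtildeE h G = 0
  · simp [h0]
  · rw [if_neg h0]
    by_cases hdeg : 0 < (G.coeff 0).natDegree
    · rw [if_pos hdeg]
      have hc : (FtildeE h G).natTrailingDegree = 0 := by
        have hne : (FtildeE h G).coeff 0 ≠ 0 := by
          rw [coeff_FtildeE]
          simp only [Nat.cast_zero, mul_zero, add_zero]
          intro hzero
          have := Polynomial.natDegree_eq_zero_of_derivative_eq_zero hzero
          omega
        have := Polynomial.natTrailingDegree_le_of_ne_zero hne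
        omega
      rw [hc]
      simp
    · rw [if_neg hdeg]
      conv_lhs => rw [← X_pow_mul_divX_iter (FtildeE h G).natTrailingDegree (FtildeE h G) le_rfl]
      rw [epoly_X_pow_mul]


lemma analyticAt_polyeval (p : Polynomial ℝ) (x : ℝ) :
    AnalyticAt ℝ (fun y => p.eval y) x := by
  have : AnalyticAt ℝ (id : ℝ → ℝ) x := analyticAt_id
  have h2 := this.aeval_polynomial p
  simpa using h2

lemma analyticOnNhd_epoly (h : Polynomial ℤ) (F : Polynomial (Polynomial ℤ)) :
    AnalyticOnNhd ℝ (epoly h F) Set.univ := by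
  have hrep : epoly h F = fun x =>
      ∑ i ∈ Finset.range (F.natDegree + 1), (cf F i).eval x * Real.exp (Hc h x) ^ i :=
    funext fun y => epoly_eq_sum h F (Nat.lt_succ_self _) y
  rw [hrep]
  intro x _
  refine Finset.analyticAt_fun_sum _ fun i _ => ?_
  exact (analyticAt_polyeval (cf F i) x).mul
    ((analyticAt_rexp.comp (analyticAt_polyeval _ x)).pow i)

/-- If an E-polynomial vanishes on a nontrivial interval, it vanishes everywhere. -/
lemma epoly_eq_zero_of_eqOn_Icc (h : Polynomial ℤ) (F : Polynomial (Polynomial ℤ))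
    {a b : ℝ} (hab : a < b) (hz : ∀ x ∈ Set.Icc a b, epoly h F x = 0) (y : ℝ) :
    epoly h F y = 0 := by
  have hev : epoly h F =ᶠ[nhds ((a + b) / 2)] 0 := by
    have hmem : Set.Ioo a b ∈ nhds ((a + b) / 2) :=
      Ioo_mem_nhds (by linarith) (by linarith)
    exact Filter.eventuallyEq_of_mem hmem fun x hx => hz x (Set.Ioo_subset_Icc_self hx)
  have := (analyticOnNhd_epoly h F).eqOn_zero_of_preconnected_of_eventuallyEq_zero
    isPreconnected_univ (Set.mem_univ ((a + b) / 2)) hev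
  exact this (Set.mem_univ y)


lemma decay (p : Polynomial ℝ) (q : Polynomial ℤ) (hq : 0 < q.natDegree)
    (hlead : q.leadingCoeff < 0) :
    Tendsto (fun x => p.eval x * Real.exp ((q.map (Int.castRingHom ℝ)).eval x))
      atTop (nhds 0) := by
  set d := q.natDegree with hd
  set s : Polynomial ℤ := Polynomial.C 2 * q + Polynomial.X with hs
  have hLml : q.leadingCoeff ≤ -1 := by omega
  have hcd : s.coeff d = 2 * q.leadingCoeff + (Polynomial.X : Polynomial ℤ).coeff d := by
    simp only [hs, Polynomial.coeff_add, Polynomial.coeff_C_mul, Polynomial.leadingCoeff, hd]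
  have hXd : (Polynomial.X : Polynomial ℤ).coeff d ≤ 1 := by
    rw [Polynomial.coeff_X]
    split <;> norm_num
  have hcdneg : s.coeff d < 0 := by
    have := hXd
    omega
  have hinj : Function.Injective (Int.castRingHom ℝ) := by
    simpa [Int.coe_castRingHom] using (Int.cast_injective (α := ℝ))
  have hndle : s.natDegree ≤ d := by
    refine Polynomial.natDegree_add_le_of_degree_le ?_ ?_
    · exact (Polynomial.natDegree_C_mul_le 2 q)
    · simpa using (show 1 ≤ d from hq)
  have hnd : s.natDegree = d :=
    le_antisymm hndle (Polynomial.le_natDegree_of_ne_zero (by exact_mod_cast hcdneg.ne))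
  have hslead : s.leadingCoeff < 0 := by
    rw [Polynomial.leadingCoeff, hnd]; exact hcdneg
  set s' : Polynomial ℝ := s.map (Int.castRingHom ℝ) with hs'
  have hnd' : s'.natDegree = d := by
    rw [hs', Polynomial.natDegree_map_eq_of_injective hinj]
    exact hnd
  have hdeg' : 0 < s'.degree := by
    rw [Polynomial.degree_eq_natDegree (fun h0 => by simp [h0] at hnd'; omega), hnd']
    exact_mod_cast hq
  have hlead' : s'.leadingCoeff ≤ 0 := by
    rw [hs', Polynomial.leadingCoeff_map_of_injective hinj, Int.coe_castRingHom]
    show ((s.leadingCoeff : ℤ) : ℝ) ≤ 0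
    exact_mod_cast hslead.le
  have hbot : Tendsto (fun x => s'.eval x) atTop atBot :=
    Polynomial.tendsto_atBot_of_leadingCoeff_nonpos s' hdeg' hlead'
  have hev : ∀ᶠ x in atTop, (q.map (Int.castRingHom ℝ)).eval x ≤ -(x / 2) := by
    filter_upwards [hbot.eventually_le_atBot 0] with x hx
    have : s'.eval x = 2 * (q.map (Int.castRingHom ℝ)).eval x + x := by
      simp [hs', hs, Polynomial.map_add, Polynomial.map_mul]
    rw [this] at hx
    linarith
  set pc : Polynomial ℝ := p.comp (Polynomial.C 2 * Polynomial.X) with hpc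
  have hcomp : ∀ x : ℝ, pc.eval (x / 2) = p.eval x := by
    intro x
    simp [hpc, Polynomial.eval_comp]
    ring_nf
  have hlim : Tendsto (fun x : ℝ => |pc.eval (x / 2) / Real.exp (x / 2)|) atTop (nhds 0) := by
    have h0 : Tendsto (fun u : ℝ => |pc.eval u / Real.exp u|) atTop (nhds 0) := by
      have := (Polynomial.tendsto_div_exp_atTop pc).abs
      simpa using this
    have h2 : Tendsto (fun x : ℝ => x / 2) atTop atTop :=
      Filter.tendsto_id.atTop_div_const (by norm_num)
    exact h0.comp h2
  refine squeeze_zero_norm' ?_ hlim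
  filter_upwards [hev] with x hx
  have hnn : ‖p.eval x * Real.exp ((q.map (Int.castRingHom ℝ)).eval x)‖
      = |p.eval x| * Real.exp ((q.map (Int.castRingHom ℝ)).eval x) := by
    rw [Real.norm_eq_abs, abs_mul, abs_of_pos (Real.exp_pos _)]
  rw [hnn]
  have h1 : |p.eval x| * Real.exp ((q.map (Int.castRingHom ℝ)).eval x)
      ≤ |p.eval x| * Real.exp (-(x / 2)) :=
    mul_le_mul_of_nonneg_left (Real.exp_le_exp.mpr hx) (abs_nonneg _)
  have heq : |p.eval x| * Real.exp (-(x / 2)) = |pc.eval (x / 2) / Real.exp (x / 2)| := by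
    rw [abs_div, hcomp x, abs_of_pos (Real.exp_pos _), Real.exp_neg]
    ring
  exact le_of_le_of_eq h1 heq


lemma poly_not_tendsto_zero (p : Polynomial ℝ) (hp : p ≠ 0) :
    ¬ Tendsto (fun x => p.eval x) atTop (nhds 0) := by
  intro ht
  by_cases hdeg : 0 < p.degree
  · have habs := Polynomial.abs_tendsto_atTop p hdeg
    have := ht.abs
    rw [abs_zero] at this
    exact not_tendsto_nhds_of_tendsto_atTop habs 0 this
  · push_neg at hdeg
    obtain ⟨c, rfl⟩ : ∃ c, p = Polynomial.C c := ⟨_, Polynomial.eq_C_of_degree_le_zero hdeg⟩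
    have hc : c = 0 := by
      have h1 : Tendsto (fun _ : ℝ => c) atTop (nhds c) := tendsto_const_nhds
      have h2 : Tendsto (fun x : ℝ => (Polynomial.C c).eval x) atTop (nhds 0) := ht
      simp only [Polynomial.eval_C] at h2
      exact tendsto_nhds_unique h1 h2
    exact hp (by rw [hc, map_zero])

lemma epoly_not_identically_zero (h : Polynomial ℤ) (hh : 0 < h.natDegree)
    (F : Polynomial (Polynomial ℤ)) (hF : F ≠ 0) :
    ¬ ∀ x, epoly h F x = 0 := by
  intro hzero
  have hinj : Function.Injective (Int.castRingHom ℝ) := by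
    simpa [Int.coe_castRingHom] using (Int.cast_injective (α := ℝ))
  have hne : h ≠ 0 := fun h0 => by simp [h0] at hh
  have hlead0 : h.leadingCoeff ≠ 0 := Polynomial.leadingCoeff_ne_zero.mpr hne
  set M := F.natDegree + 1 with hM
  -- the generic argument, for a distinguished index `nstar`
  have key : ∀ nstar : ℕ, nstar < M → F.coeff nstar ≠ 0 →
      (∀ n, n < M → n ≠ nstar → F.coeff n ≠ 0 →
        ((n : ℤ) - (nstar : ℤ)) * h.leadingCoeff < 0) → False := by
    intro nstar hnstarM hcstar hsgn
    set T : ℕ → ℝ → ℝ := fun n x =>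
      (cf F n).eval x * Real.exp (((n : ℝ) - (nstar : ℝ)) * Hc h x) with hT
    have hTsum : ∀ x, ∑ n ∈ Finset.range M, T n x = 0 := by
      intro x
      have h0 := hzero x
      rw [epoly_eq_sum h F (Nat.lt_succ_self _) x] at h0
      have hre : ∑ n ∈ Finset.range M, T n x
          = (∑ n ∈ Finset.range M, (cf F n).eval x * Real.exp (Hc h x) ^ n)
            * Real.exp (-(nstar : ℝ) * Hc h x) := by
        rw [Finset.sum_mul]
        refine Finset.sum_congr rfl fun n _ => ?_
        rw [hT]
        simp only
        rw [mul_assoc, ← Real.exp_nat_mul, ← Real.exp_add]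
        congr 2
        ring
      rw [hre, h0, zero_mul]
    -- every non-distinguished term tends to zero
    have hterm : ∀ n, n < M → n ≠ nstar → Tendsto (fun x => T n x) atTop (nhds 0) := by
      intro n hnM hnne
      by_cases hcn : F.coeff n = 0
      · have : (fun x => T n x) = fun _ => 0 := by
          funext x
          rw [hT]
          simp [cf, hcn]
        rw [this]
        exact tendsto_const_nhds
      · have hz : ((n : ℤ) - (nstar : ℤ)) ≠ 0 := by
          intro hcontra
          apply hnne
          omega
        have hdecay := decay (cf F n) (Polynomial.C ((n : ℤ) - (nstar : ℤ)) * h) ?_ ?_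
        · refine hdecay.congr fun x => ?_
          rw [hT]
          simp only
          congr 2
          rw [Polynomial.map_mul, Polynomial.map_C, Polynomial.eval_mul, Polynomial.eval_C,
            Int.coe_castRingHom, Hc]
          push_cast
          ring
        · rwa [Polynomial.natDegree_C_mul hz]
        · rw [Polynomial.leadingCoeff_mul, Polynomial.leadingCoeff_C]
          exact hsgn n hnM hnne hcn
    -- hence the distinguished term tends to zero
    have hmem : nstar ∈ Finset.range M := Finset.mem_range.mpr hnstarM
    have hstar_eq : ∀ x, T nstar x = -∑ n ∈ (Finset.range M).erase nstar, T n x := by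
      intro x
      have := Finset.add_sum_erase (Finset.range M) (fun n => T n x) hmem
      rw [hTsum x] at this
      linarith
    have hsum0 : Tendsto (fun x => ∑ n ∈ (Finset.range M).erase nstar, T n x)
        atTop (nhds 0) := by
      have := tendsto_finset_sum ((Finset.range M).erase nstar)
        (fun n hn => hterm n (Finset.mem_range.mp (Finset.mem_of_mem_erase hn))
          (Finset.ne_of_mem_erase hn))
      simpa using this
    have hstar0 : Tendsto (fun x => T nstar x) atTop (nhds 0) := by
      have := hsum0.neg
      rw [neg_zero] at this
      exact this.congr fun x => (hstar_eq x).symm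
    have hstar_eval : ∀ x, T nstar x = (cf F nstar).eval x := by
      intro x
      rw [hT]
      simp
    have : Tendsto (fun x => (cf F nstar).eval x) atTop (nhds 0) :=
      hstar0.congr hstar_eval
    refine poly_not_tendsto_zero (cf F nstar) ?_ this
    rw [cf, Ne, Polynomial.map_eq_zero_iff hinj]
    exact hcstar
  rcases lt_or_gt_of_ne hlead0 with hneg | hpos
  · -- leading coefficient of h negative: use the trailing coefficient of F
    refine key F.natTrailingDegree
      (lt_of_le_of_lt F.natTrailingDegree_le_natDegree (Nat.lt_succ_self _)) ?_ ?_
    · exact Polynomial.trailingCoeff_nonzero_iff_nonzero.mpr hF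
    · intro n _ hnne hcn
      have hle : F.natTrailingDegree ≤ n := Polynomial.natTrailingDegree_le_of_ne_zero hcn
      have : (0 : ℤ) < (n : ℤ) - F.natTrailingDegree := by
        have : F.natTrailingDegree < n := lt_of_le_of_ne hle (Ne.symm hnne)
        omega
      exact mul_neg_of_pos_of_neg this hneg
  · -- leading coefficient of h positive: use the leading coefficient of F
    refine key F.natDegree (Nat.lt_succ_self _) ?_ ?_
    · exact Polynomial.leadingCoeff_ne_zero.mpr hF
    · intro n hnM hnne _
      have : (n : ℤ) - F.natDegree < 0 := by
        have : n < F.natDegree + 1 := hnM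
        have hlt : n < F.natDegree := by omega
        omega
      exact mul_neg_of_neg_of_pos this hpos


lemma sign_eq_one_iff' {r : ℝ} : Real.sign r = 1 ↔ 0 < r := by
  constructor
  · intro hr
    rcases lt_trichotomy r 0 with hlt | rfl | hgt
    · rw [Real.sign_of_neg hlt] at hr; norm_num at hr
    · rw [Real.sign_zero] at hr; norm_num at hr
    · exact hgt
  · exact Real.sign_of_pos

lemma sign_eq_neg_one_iff' {r : ℝ} : Real.sign r = -1 ↔ r < 0 := by
  constructor
  · intro hr
    rcases lt_trichotomy r 0 with hlt | rfl | hgt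
    · exact hlt
    · rw [Real.sign_zero] at hr; norm_num at hr
    · rw [Real.sign_of_pos hgt] at hr; norm_num at hr
  · exact Real.sign_of_neg

lemma sign_chain (g c : ℕ → ℝ → ℝ) (n : ℕ)
    (hder : ∀ i, i < n → ∀ x, HasDerivAt (g i) (c i x * g (i + 1) x) x)
    (hpos : ∀ i, i < n → ∀ x, 0 < c i x)
    (a b : ℝ) (hab : a < b)
    (hsg : ∀ i, i ≤ n → Real.sign (g i a) = Real.sign (g i b))
    (htop : ∀ x, g n x = 0) :
    ∀ d i, i + d = n → ∀ x ∈ Set.Icc a b, Real.sign (g i x) = Real.sign (g i a) := by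
  intro d
  induction d with
  | zero =>
      intro i hi x _
      have hin : i = n := by omega
      subst hin
      rw [htop x, htop a]
  | succ d ih =>
      intro i hi x hx
      have hiltn : i < n := by omega
      have IH : ∀ y ∈ Set.Icc a b, Real.sign (g (i + 1) y) = Real.sign (g (i + 1) a) :=
        ih (i + 1) (by omega)
      have hcont : ContinuousOn (g i) (Set.Icc a b) := fun y _ =>
        ((hder i hiltn y).continuousAt).continuousWithinAt
      have hmema : a ∈ Set.Icc a b := Set.left_mem_Icc.mpr hab.le
      have hmemb : b ∈ Set.Icc a b := Set.right_mem_Icc.mpr hab.le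
      rcases lt_trichotomy (g (i + 1) a) 0 with hneg | heq | hposa
      · -- g (i+1) < 0 on [a,b] : g i is strictly decreasing
        have hlt : ∀ y ∈ Set.Icc a b, g (i + 1) y < 0 := by
          intro y hy
          have := IH y hy
          rw [Real.sign_of_neg hneg] at this
          exact sign_eq_neg_one_iff'.mp this
        have hanti : StrictAntiOn (g i) (Set.Icc a b) := by
          refine strictAntiOn_of_deriv_neg (convex_Icc a b) hcont fun y hy => ?_
          rw [interior_Icc] at hy
          rw [(hder i hiltn y).deriv]
          exact mul_neg_of_pos_of_neg (hpos i hiltn y) (hlt y (Set.Ioo_subset_Icc_self hy))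
        have hba : g i b < g i a := hanti hmema hmemb hab
        have hs := hsg i hiltn.le
        rcases lt_trichotomy (g i a) 0 with ha | ha | ha
        · -- both endpoints negative
          have hxa : g i x < 0 := by
            rcases eq_or_lt_of_le hx.1 with rfl | hax
            · exact ha
            · exact lt_trans (hanti hmema hx hax) ha
          rw [Real.sign_of_neg hxa, Real.sign_of_neg ha]
        · -- g i a = 0 : then g i b = 0, contradiction with strict anti
          rw [ha, Real.sign_zero] at hs
          have : g i b = 0 := Real.sign_eq_zero_iff.mp hs.symm
          rw [ha, this] at hba
          exact absurd hba (lt_irrefl 0)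
        · -- both endpoints positive
          have hb : 0 < g i b := by
            have := hs
            rw [Real.sign_of_pos ha] at this
            exact sign_eq_one_iff'.mp this.symm
          have hxa : 0 < g i x := by
            rcases eq_or_lt_of_le hx.2 with rfl | hxb
            · exact hb
            · exact lt_trans hb (hanti hx hmemb hxb)
          rw [Real.sign_of_pos hxa, Real.sign_of_pos ha]
      · -- g (i+1) = 0 on [a,b] : g i is constant
        have hzero : ∀ y ∈ Set.Icc a b, g (i + 1) y = 0 := by
          intro y hy
          have := IH y hy
          rw [heq, Real.sign_zero] at this
          exact Real.sign_eq_zero_iff.mp this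
        have hconst : ∀ y ∈ Set.Icc a b, g i y = g i a := by
          refine constant_of_has_deriv_right_zero hcont fun y hy => ?_
          have hd := (hder i hiltn y).hasDerivWithinAt (s := Set.Ici y)
          rw [hzero y (Set.Ico_subset_Icc_self hy), mul_zero] at hd
          exact hd
        rw [hconst x hx]
      · -- g (i+1) > 0 on [a,b] : g i is strictly increasing
        have hlt : ∀ y ∈ Set.Icc a b, 0 < g (i + 1) y := by
          intro y hy
          have := IH y hy
          rw [Real.sign_of_pos hposa] at this
          exact sign_eq_one_iff'.mp this
        have hmono : StrictMonoOn (g i) (Set.Icc a b) := by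
          refine strictMonoOn_of_deriv_pos (convex_Icc a b) hcont fun y hy => ?_
          rw [interior_Icc] at hy
          rw [(hder i hiltn y).deriv]
          exact mul_pos (hpos i hiltn y) (hlt y (Set.Ioo_subset_Icc_self hy))
        have hba : g i a < g i b := hmono hmema hmemb hab
        have hs := hsg i hiltn.le
        rcases lt_trichotomy (g i a) 0 with ha | ha | ha
        · -- both endpoints negative
          have hb : g i b < 0 := by
            have := hs
            rw [Real.sign_of_neg ha] at this
            exact sign_eq_neg_one_iff'.mp this.symm
          have hxa : g i x < 0 := by
            rcases eq_or_lt_of_le hx.2 with rfl | hxb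
            · exact hb
            · exact lt_trans (hmono hx hmemb hxb) hb
          rw [Real.sign_of_neg hxa, Real.sign_of_neg ha]
        · rw [ha, Real.sign_zero] at hs
          have : g i b = 0 := Real.sign_eq_zero_iff.mp hs.symm
          rw [ha, this] at hba
          exact absurd hba (lt_irrefl 0)
        · have hxa : 0 < g i x := by
            rcases eq_or_lt_of_le hx.1 with rfl | hax
            · exact ha
            · exact lt_trans ha (hmono hmema hx hax)
          rw [Real.sign_of_pos hxa, Real.sign_of_pos ha]


/-- main auxiliary lemma: two distinct zeros with equal Thom sign data are impossible. -/
lemma thom_aux (h : Polynomial ℤ) (hh : 0 < h.natDegree)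
    (F : Polynomial (Polynomial ℤ)) (hF : F ≠ 0) (D : ℕ)
    (hD : (pderPoly h)^[D + 1] F = 0)
    (ξ₁ ξ₂ : ℝ) (hlt : ξ₁ < ξ₂)
    (h1 : epoly h F ξ₁ = 0) (h2 : epoly h F ξ₂ = 0)
    (hsign : ∀ i, 1 ≤ i → i ≤ D →
      Real.sign (epoly h ((pderPoly h)^[i] F) ξ₁) =
        Real.sign (epoly h ((pderPoly h)^[i] F) ξ₂)) :
    False := by
  set g : ℕ → ℝ → ℝ := fun i => epoly h ((pderPoly h)^[i] F) with hg
  set c : ℕ → ℝ → ℝ := fun i x =>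
    Real.exp (Hc h x) ^ (FtildeE h ((pderPoly h)^[i] F)).natTrailingDegree with hc
  have hder : ∀ i, i < D + 1 → ∀ x, HasDerivAt (g i) (c i x * g (i + 1) x) x := by
    intro i _ x
    have hd := hasDerivAt_epoly h ((pderPoly h)^[i] F) x
    rw [epoly_FtildeE] at hd
    rw [hg, hc]
    simp only
    rw [Function.iterate_succ_apply']
    exact hd
  have hpos : ∀ i, i < D + 1 → ∀ x, 0 < c i x := fun i _ x =>
    pow_pos (Real.exp_pos _) _
  have htop : ∀ x, g (D + 1) x = 0 := by
    intro x
    rw [hg]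
    simp only
    rw [hD, epoly_zero]
  have hsg : ∀ i, i ≤ D + 1 → Real.sign (g i ξ₁) = Real.sign (g i ξ₂) := by
    intro i hi
    rcases Nat.eq_zero_or_pos i with rfl | hipos
    · rw [hg]
      simp only [Function.iterate_zero_apply]
      rw [h1, h2]
    · rcases eq_or_lt_of_le hi with rfl | hiD
      · rw [htop ξ₁, htop ξ₂]
      · exact hsign i hipos (by omega)
  have hchain := sign_chain g c (D + 1) hder hpos ξ₁ ξ₂ hlt hsg htop D 1 (by omega)
  have hmema : ξ₁ ∈ Set.Icc ξ₁ ξ₂ := Set.left_mem_Icc.mpr hlt.le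
  have hmemb : ξ₂ ∈ Set.Icc ξ₁ ξ₂ := Set.right_mem_Icc.mpr hlt.le
  have hg0 : ∀ x, g 0 x = epoly h F x := by
    intro x; rw [hg]; simp only [Function.iterate_zero_apply]
  have hcont : ContinuousOn (g 0) (Set.Icc ξ₁ ξ₂) := fun y _ =>
    ((hder 0 (by omega) y).continuousAt).continuousWithinAt
  rcases lt_trichotomy (g 1 ξ₁) 0 with hneg | heq | hposa
  · -- g 1 < 0 on the interval : epoly h F strictly decreasing, two zeros impossible
    have hlt1 : ∀ y ∈ Set.Icc ξ₁ ξ₂, g 1 y < 0 := by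
      intro y hy
      have := hchain y hy
      rw [Real.sign_of_neg hneg] at this
      exact sign_eq_neg_one_iff'.mp this
    have hanti : StrictAntiOn (g 0) (Set.Icc ξ₁ ξ₂) := by
      refine strictAntiOn_of_deriv_neg (convex_Icc ξ₁ ξ₂) hcont fun y hy => ?_
      rw [interior_Icc] at hy
      rw [(hder 0 (by omega) y).deriv]
      exact mul_neg_of_pos_of_neg (hpos 0 (by omega) y) (hlt1 y (Set.Ioo_subset_Icc_self hy))
    have := hanti hmema hmemb hlt
    rw [hg0, hg0, h1, h2] at this
    exact absurd this (lt_irrefl 0)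
  · -- g 1 = 0 on the interval : epoly h F vanishes identically, contradiction
    have hzero1 : ∀ y ∈ Set.Icc ξ₁ ξ₂, g 1 y = 0 := by
      intro y hy
      have := hchain y hy
      rw [heq, Real.sign_zero] at this
      exact Real.sign_eq_zero_iff.mp this
    have hconst : ∀ y ∈ Set.Icc ξ₁ ξ₂, g 0 y = g 0 ξ₁ := by
      refine constant_of_has_deriv_right_zero hcont fun y hy => ?_
      have hd := (hder 0 (by omega) y).hasDerivWithinAt (s := Set.Ici y)
      rw [hzero1 y (Set.Ico_subset_Icc_self hy), mul_zero] at hd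
      exact hd
    have hall : ∀ y ∈ Set.Icc ξ₁ ξ₂, epoly h F y = 0 := by
      intro y hy
      rw [← hg0 y, hconst y hy, hg0, h1]
    exact epoly_not_identically_zero h hh F hF
      (epoly_eq_zero_of_eqOn_Icc h F hlt hall)
  · -- g 1 > 0 on the interval : epoly h F strictly increasing, two zeros impossible
    have hlt1 : ∀ y ∈ Set.Icc ξ₁ ξ₂, 0 < g 1 y := by
      intro y hy
      have := hchain y hy
      rw [Real.sign_of_pos hposa] at this
      exact sign_eq_one_iff'.mp this
    have hmono : StrictMonoOn (g 0) (Set.Icc ξ₁ ξ₂) := by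
      refine strictMonoOn_of_deriv_pos (convex_Icc ξ₁ ξ₂) hcont fun y hy => ?_
      rw [interior_Icc] at hy
      rw [(hder 0 (by omega) y).deriv]
      exact mul_pos (hpos 0 (by omega) y) (hlt1 y (Set.Ioo_subset_Icc_self hy))
    have := hmono hmema hmemb hlt
    rw [hg0, hg0, h1, h2] at this
    exact absurd this (lt_irrefl 0)

end ThomAux

theorem thom_encoding_unique (h : Polynomial ℤ) (hh : 0 < h.natDegree)
    (F : Polynomial (Polynomial ℤ)) (hF : F ≠ 0) (D : ℕ)
    (hD : (pderPoly h)^[D + 1] F = 0)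
    (hDmin : ∀ i < D, (pderPoly h)^[i + 1] F ≠ 0)
    (ξ₁ ξ₂ : ℝ) (h1 : epoly h F ξ₁ = 0) (h2 : epoly h F ξ₂ = 0)
    (hsign : ∀ i, 1 ≤ i → i ≤ D →
      Real.sign (epoly h ((pderPoly h)^[i] F) ξ₁) =
        Real.sign (epoly h ((pderPoly h)^[i] F) ξ₂)) :
    ξ₁ = ξ₂ := by
  rcases lt_trichotomy ξ₁ ξ₂ with hlt | heq | hgt
  · exact absurd (ThomAux.thom_aux h hh F hF D hD ξ₁ ξ₂ hlt h1 h2 hsign) not_false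
  · exact heq
  · exact absurd (ThomAux.thom_aux h hh F hF D hD ξ₂ ξ₁ hgt h2 h1
      (fun i hi hiD => (hsign i hi hiD).symm)) not_false

end
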